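/- Let ρ be a d×d density matrix which can be written as ρ = ∑_{k=1}^{n} pₖ |ψₖ⟩⟨ψₖ| (n ≥ 2) with unit vectors ψₖ ∈ ℂ^d and real numbers 0 < pₖ < 1, ∑ₖ pₖ = 1. For each k set G̃ₖ = (1 - pₖ) · C̃_{l1}((ρ - pₖ |ψₖ⟩⟨ψₖ|)/(1 - pₖ)). Then (1/n) ∑ₖ [G̃ₖ + pₖ C_{l1}(|ψₖ⟩⟨ψₖ|)] ≤ ∑ₖ pₖ C_{l1}(|ψₖ⟩⟨ψₖ|); that is, the upper bound (1/n) ∑ₖ [G̃ₖ + pₖ C_{l1}(|ψₖ⟩⟨ψₖ|)] on C̃_{l1}(ρ) is at most the bound ∑ₖ pₖ C_{l1}(|ψₖ⟩⟨ψₖ|). -/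

import Mathlib

open Matrix BigOperators
open scoped ComplexOrder

/-- The l1-norm of coherence: sum of absolute values of all off-diagonal entries. -/
noncomputable def Cl1 {d : ℕ} (ρ : Matrix (Fin d) (Fin d) ℂ) : ℝ :=
  ∑ i, ∑ j, if i ≠ j then ‖ρ i j‖ else 0

/-- A density matrix: positive semidefinite with trace 1. -/
def IsDensityMatrix {d : ℕ} (ρ : Matrix (Fin d) (Fin d) ℂ) : Prop :=
  ρ.PosSemidef ∧ ρ.trace = 1

/-- Rank-one outer product |ψ⟩⟨ψ|. -/
noncomputable def outer {d : ℕ} (ψ : Fin d → ℂ) : Matrix (Fin d) (Fin d) ℂ :=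
  Matrix.of fun i j => ψ i * (starRingEnd ℂ) (ψ j)

/-- ψ is a unit vector in ℂ^d. -/
def IsUnitVec {d : ℕ} (ψ : Fin d → ℂ) : Prop :=
  ∑ i, Complex.normSq (ψ i) = 1

/-- The convex-roof l1-norm of coherence. -/
noncomputable def convexRoofCl1 {d : ℕ} (ρ : Matrix (Fin d) (Fin d) ℂ) : ℝ :=
  sInf { c : ℝ | ∃ (n : ℕ) (p : Fin n → ℝ) (ψ : Fin n → Fin d → ℂ),
    (∀ i, 0 ≤ p i) ∧ (∑ i, p i) = 1 ∧ (∀ i, IsUnitVec (ψ i)) ∧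
    ρ = ∑ i, p i • outer (ψ i) ∧
    c = ∑ i, p i * Cl1 (outer (ψ i)) }

lemma Cl1_nonneg {d : ℕ} (ρ : Matrix (Fin d) (Fin d) ℂ) : 0 ≤ Cl1 ρ := by
  apply Finset.sum_nonneg
  intro i _
  apply Finset.sum_nonneg
  intro j _
  split <;> positivity

lemma convexRoofCl1_bddBelow {d : ℕ} (ρ : Matrix (Fin d) (Fin d) ℂ) :
    BddBelow { c : ℝ | ∃ (n : ℕ) (p : Fin n → ℝ) (ψ : Fin n → Fin d → ℂ),
    (∀ i, 0 ≤ p i) ∧ (∑ i, p i) = 1 ∧ (∀ i, IsUnitVec (ψ i)) ∧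
    ρ = ∑ i, p i • outer (ψ i) ∧
    c = ∑ i, p i * Cl1 (outer (ψ i)) } := by
  refine ⟨0, ?_⟩
  rintro c ⟨m, q, φ, hq, -, -, -, rfl⟩
  exact Finset.sum_nonneg fun i _ => mul_nonneg (hq i) (Cl1_nonneg _)

/-- Theorem 5: the upper bound of Theorem 4 is at most ∑_k p_k C_{l1}(|ψ_k⟩⟨ψ_k|). -/
theorem convexRoofCl1_upper_bound_comparison {d n : ℕ} (hn : 2 ≤ n)
    (ρ : Matrix (Fin d) (Fin d) ℂ) (hρ : IsDensityMatrix ρ)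
    (p : Fin n → ℝ) (ψ : Fin n → Fin d → ℂ)
    (hp : ∀ k, 0 < p k ∧ p k < 1) (hsum : ∑ k, p k = 1) (hψ : ∀ k, IsUnitVec (ψ k))
    (hmix : ρ = ∑ k, p k • outer (ψ k))
    (G : Fin n → ℝ)
    (hG : ∀ k, G k = (1 - p k) * convexRoofCl1 ((1 - p k)⁻¹ • (ρ - p k • outer (ψ k)))) :
    (1 / (n : ℝ)) * ∑ k, (G k + p k * Cl1 (outer (ψ k))) ≤ ∑ k, p k * Cl1 (outer (ψ k)) := by
  set S := ∑ k, p k * Cl1 (outer (ψ k)) with hS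
  have key : ∀ k, G k + p k * Cl1 (outer (ψ k)) ≤ S := by
    intro k
    have h1k : (0:ℝ) < 1 - p k := by linarith [(hp k).2]
    set q : Fin n → ℝ := fun j => if j = k then 0 else p j / (1 - p k) with hqdef
    have hq0 : ∀ j, 0 ≤ q j := by
      intro j
      simp only [hqdef]
      split
      · exact le_refl 0
      · exact div_nonneg (hp j).1.le h1k.le
    have hqsum : ∑ j, q j = 1 := by
      have h1 : ∑ j, q j = (∑ j, (if j = k then 0 else p j)) / (1 - p k) := by
        rw [Finset.sum_div]
        exact Finset.sum_congr rfl fun j _ => by simp only [hqdef]; split <;> simp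
      have h2 : ∑ j, (if j = k then 0 else p j) = 1 - p k := by
        have hsplit : ∑ j, ((if j = k then 0 else p j) + (if j = k then p j else 0))
            = ∑ j, p j := Finset.sum_congr rfl fun j _ => by split <;> simp
        rw [Finset.sum_add_distrib, Finset.sum_ite_eq' Finset.univ k p, hsum] at hsplit
        simp at hsplit
        linarith
      rw [h1, h2]
      field_simp
    have hdecomp : (1 - p k)⁻¹ • (ρ - p k • outer (ψ k)) = ∑ j, q j • outer (ψ j) := by
      rw [hmix]
      have h3 : (∑ j, p j • outer (ψ j)) - p k • outer (ψ k)
          = ∑ j, (if j = k then 0 else p j) • outer (ψ j) := by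
        have hsplit : ∑ j, p j • outer (ψ j)
            = (∑ j, (if j = k then 0 else p j) • outer (ψ j))
              + ∑ j, (if j = k then p j • outer (ψ j) else 0) := by
          rw [← Finset.sum_add_distrib]
          exact Finset.sum_congr rfl fun j _ => by split <;> simp_all
        rw [Finset.sum_ite_eq' Finset.univ k (fun j => p j • outer (ψ j))] at hsplit
        simp only [Finset.mem_univ, if_true] at hsplit
        rw [hsplit]
        abel
      rw [h3, Finset.smul_sum]
      exact Finset.sum_congr rfl fun j _ => by
        rw [smul_smul]
        simp only [hqdef]
        split
        · simp
        · rw [div_eq_inv_mul]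
    have hle : convexRoofCl1 ((1 - p k)⁻¹ • (ρ - p k • outer (ψ k)))
        ≤ ∑ j, q j * Cl1 (outer (ψ j)) :=
      csInf_le (convexRoofCl1_bddBelow _) ⟨n, q, ψ, hq0, hqsum, hψ, hdecomp, rfl⟩
    have h4 : (1 - p k) * ∑ j, q j * Cl1 (outer (ψ j)) = S - p k * Cl1 (outer (ψ k)) := by
      rw [Finset.mul_sum]
      have hterm : ∀ j, (1 - p k) * (q j * Cl1 (outer (ψ j)))
          = (if j = k then 0 else p j * Cl1 (outer (ψ j))) := by
        intro j
        simp only [hqdef]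
        split
        · ring
        · field_simp
      rw [Finset.sum_congr rfl fun j _ => hterm j]
      have hsplit : ∑ j, ((if j = k then 0 else p j * Cl1 (outer (ψ j)))
            + (if j = k then p j * Cl1 (outer (ψ j)) else 0)) = S :=
        Finset.sum_congr rfl fun j _ => by split <;> simp
      rw [Finset.sum_add_distrib,
        Finset.sum_ite_eq' Finset.univ k (fun j => p j * Cl1 (outer (ψ j)))] at hsplit
      simp only [Finset.mem_univ, if_true] at hsplit
      linarith
    rw [hG k]
    have hmul := mul_le_mul_of_nonneg_left hle h1k.le
    rw [h4] at hmul
    linarith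
  have hsumle : ∑ k, (G k + p k * Cl1 (outer (ψ k))) ≤ n * S := by
    calc ∑ k, (G k + p k * Cl1 (outer (ψ k))) ≤ ∑ _k : Fin n, S :=
      Finset.sum_le_sum fun k _ => key k
    _ = n * S := by simp [Finset.sum_const, nsmul_eq_mul]
  have hnpos : (0:ℝ) < n := by positivity
  have := mul_le_mul_of_nonneg_left hsumle (le_of_lt (by positivity : (0:ℝ) < 1 / n))
  calc (1 / (n : ℝ)) * ∑ k, (G k + p k * Cl1 (outer (ψ k))) ≤ (1 / n) * (n * S) := this
  _ = S := by field_simp
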